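/- Define g_p^tr(A) = tr(A^p) on the Euclidean space of n×n complex Hermitian matrices with the Hilbert–Schmidt inner product. Then the Laplacian satisfies Δ g_p^tr(A) = p · Σ_{k=0}^{p−2} tr(A^k)·tr(A^{p−2−k}) for every p ≥ 2 and every Hermitian matrix A. -/

import Mathlib

set_option maxHeartbeats 1000000


open Matrix


attribute [local instance] Matrix.frobeniusNormedAddCommGroup Matrix.frobeniusNormedRing
  Matrix.frobeniusNormedSpace Matrix.frobeniusNormedAlgebra

variable {n : ℕ}

lemma hasDerivAt_mat_pow (A H : Matrix (Fin n) (Fin n) ℂ) (m : ℕ) (s : ℝ) :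
    HasDerivAt (fun t : ℝ => (A + t • H) ^ m)
      (∑ k ∈ Finset.range m, (A + s • H) ^ k * H * (A + s • H) ^ (m - 1 - k)) s := by
  induction m with
  | zero =>
    simp only [pow_zero, Finset.range_zero, Finset.sum_empty]
    exact hasDerivAt_const s (1 : Matrix (Fin n) (Fin n) ℂ)
  | succ m ih =>
    have hbase : HasDerivAt (fun t : ℝ => A + t • H) H s := by
      have hb := ((hasDerivAt_id s).smul_const H).const_add A
      simp only [id, one_smul] at hb
      exact hb
    have h2 : HasDerivAt (fun t : ℝ => (A + t • H) ^ m * (A + t • H)) _ s := ih.mul hbase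
    have hfun : (fun t : ℝ => (A + t • H) ^ m * (A + t • H))
        = fun t : ℝ => (A + t • H) ^ (m + 1) := by
      funext t; rw [pow_succ]
    rw [hfun] at h2
    have heq : (∑ k ∈ Finset.range m, (A + s • H) ^ k * H * (A + s • H) ^ (m - 1 - k)) * (A + s • H)
        + (A + s • H) ^ m * H
        = ∑ k ∈ Finset.range (m + 1), (A + s • H) ^ k * H * (A + s • H) ^ (m + 1 - 1 - k) := by
      rw [Finset.sum_mul, Finset.sum_range_succ]
      simp only [Nat.add_sub_cancel, Nat.sub_self, pow_zero, mul_one]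
      refine congrArg₂ (· + ·) (Finset.sum_congr rfl fun k hk => ?_) rfl
      rw [Finset.mem_range] at hk
      rw [mul_assoc, ← pow_succ]
      congr 2
      omega
    rw [heq] at h2
    exact h2

noncomputable def traceCLM (n : ℕ) : Matrix (Fin n) (Fin n) ℂ →L[ℝ] ℂ :=
  LinearMap.toContinuousLinearMap ((Matrix.traceLinearMap (Fin n) ℂ ℂ).restrictScalars ℝ)

@[simp] lemma traceCLM_apply (M : Matrix (Fin n) (Fin n) ℂ) : traceCLM n M = M.trace := rfl

lemma hasDerivAt_trace_pow_mul (A H B : Matrix (Fin n) (Fin n) ℂ) (m : ℕ) (s : ℝ) :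
    HasDerivAt (fun t : ℝ => ((A + t • H) ^ m * B).trace)
      ((∑ k ∈ Finset.range m, (A + s • H) ^ k * H * (A + s • H) ^ (m - 1 - k)) * B).trace s := by
  have h1 := (hasDerivAt_mat_pow A H m s).mul_const B
  have h2 := (traceCLM n).hasFDerivAt.comp_hasDerivAt s h1
  exact h2

lemma hasDerivAt_trace_pow (A H : Matrix (Fin n) (Fin n) ℂ) (m : ℕ) (s : ℝ) :
    HasDerivAt (fun t : ℝ => ((A + t • H) ^ m).trace)
      ((m : ℂ) * ((A + s • H) ^ (m - 1) * H).trace) s := by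
  have h1 := (traceCLM n).hasFDerivAt.comp_hasDerivAt s (hasDerivAt_mat_pow A H m s)
  have heq : (traceCLM n) (∑ k ∈ Finset.range m,
        (A + s • H) ^ k * H * (A + s • H) ^ (m - 1 - k))
      = (m : ℂ) * ((A + s • H) ^ (m - 1) * H).trace := by
    rw [traceCLM_apply, Matrix.trace_sum]
    have : ∀ k ∈ Finset.range m,
        ((A + s • H) ^ k * H * (A + s • H) ^ (m - 1 - k)).trace
          = ((A + s • H) ^ (m - 1) * H).trace := by
      intro k hk
      rw [Finset.mem_range] at hk
      rw [Matrix.trace_mul_comm ((A + s • H) ^ k * H) ((A + s • H) ^ (m - 1 - k)),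
        ← mul_assoc, ← pow_add]
      have : m - 1 - k + k = m - 1 := by omega
      rw [this]
    rw [Finset.sum_congr rfl this, Finset.sum_const, Finset.card_range, nsmul_eq_mul]
  rw [← heq]
  exact h1

lemma iteratedDeriv_two_trace_pow (A H : Matrix (Fin n) (Fin n) ℂ) (p : ℕ) (hp : 2 ≤ p) :
    iteratedDeriv 2 (fun s : ℝ => ((A + s • H) ^ p).trace) 0
      = (p : ℂ) * ∑ k ∈ Finset.range (p - 1), (A ^ k * H * A ^ (p - 2 - k) * H).trace := by
  rw [iteratedDeriv_succ, iteratedDeriv_one]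
  have hderiv : deriv (fun s : ℝ => ((A + s • H) ^ p).trace)
      = fun s : ℝ => (p : ℂ) * ((A + s • H) ^ (p - 1) * H).trace :=
    funext fun s => (hasDerivAt_trace_pow A H p s).deriv
  rw [hderiv]
  have h1 := ((hasDerivAt_trace_pow_mul A H H (p - 1) 0).const_mul ((p : ℂ)))
  have h0 : A + (0 : ℝ) • H = A := by simp
  rw [h0] at h1
  rw [h1.deriv]
  rw [Finset.sum_mul, Matrix.trace_sum, Finset.mul_sum, Finset.mul_sum]
  refine Finset.sum_congr rfl fun k hk => ?_
  have : p - 1 - 1 - k = p - 2 - k := by omega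
  rw [this]

section LinAlg

variable {ι : Type*} [Fintype ι] [DecidableEq ι] (H : ι → Matrix (Fin n) (Fin n) ℂ)

lemma L_id (horth : ∀ i j, (H i * H j).trace = if i = j then 1 else 0)
    (hspan : ∀ M : Matrix (Fin n) (Fin n) ℂ, M.IsHermitian →
      M ∈ Submodule.span ℝ (Set.range H))
    (M : Matrix (Fin n) (Fin n) ℂ) :
    ∑ i, (H i * M).trace • H i = M := by
  set L : Matrix (Fin n) (Fin n) ℂ →ₗ[ℂ] Matrix (Fin n) (Fin n) ℂ :=
    { toFun := fun M => ∑ i, (H i * M).trace • H i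
      map_add' := by
        intro x y
        simp [Matrix.mul_add, add_smul, Finset.sum_add_distrib]
      map_smul' := by
        intro c x
        simp [Matrix.mul_smul, smul_smul, Finset.smul_sum] } with hLdef
  show L M = M
  have hherm' : ∀ N : Matrix (Fin n) (Fin n) ℂ, N.IsHermitian → L N = N := by
    intro N hN
    refine Submodule.span_induction ?_ ?_ ?_ ?_ (hspan N hN)
    · rintro x ⟨j, rfl⟩
      show (∑ i, (H i * H j).trace • H i) = H j
      simp [horth]
    · exact map_zero L
    · intro x y _ _ hx hy
      rw [map_add, hx, hy]
    · intro r x _ hx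
      rw [L.map_smul_of_tower r x, hx]
  have hc : Complex.I * (-Complex.I / 2) = 1 / 2 := by
    linear_combination (-(1 : ℂ) / 2) * Complex.I_mul_I
  have h1 : ((1 / 2 : ℂ) • (M + Mᴴ)).IsHermitian := by
    unfold Matrix.IsHermitian
    rw [Matrix.conjTranspose_smul, Matrix.conjTranspose_add,
      Matrix.conjTranspose_conjTranspose]
    rw [add_comm Mᴴ M]
    congr 1
    simp
  have h2 : ((-Complex.I / 2 : ℂ) • (M - Mᴴ)).IsHermitian := by
    unfold Matrix.IsHermitian
    rw [Matrix.conjTranspose_smul, Matrix.conjTranspose_sub,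
      Matrix.conjTranspose_conjTranspose]
    rw [show star (-Complex.I / 2 : ℂ) = Complex.I / 2 by simp, ← neg_sub M Mᴴ]
    rw [smul_neg, ← neg_smul, neg_div]
  have hdecomp : M = (1 / 2 : ℂ) • (M + Mᴴ) + Complex.I • ((-Complex.I / 2 : ℂ) • (M - Mᴴ)) := by
    rw [smul_smul, hc]
    module
  conv_lhs => rw [hdecomp]
  rw [map_add, hherm' _ h1, _root_.map_smul, hherm' _ h2, ← hdecomp]

lemma key_id (horth : ∀ i j, (H i * H j).trace = if i = j then 1 else 0)
    (hspan : ∀ M : Matrix (Fin n) (Fin n) ℂ, M.IsHermitian →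
      M ∈ Submodule.span ℝ (Set.range H))
    (a b c d : Fin n) :
    (∑ i, H i a b * H i c d)
      = (if a = d then (1 : ℂ) else 0) * (if b = c then 1 else 0) := by
  have h := congrFun (congrFun (L_id H horth hspan (Matrix.single b a 1)) c) d
  have htr : ∀ i, (H i * Matrix.single b a 1).trace = H i a b := by
    intro i
    simp [Matrix.trace, Matrix.diag, Matrix.mul_apply, Matrix.single, ite_and,
      Finset.sum_ite_eq]
  simp only [Matrix.sum_apply, Matrix.smul_apply, htr, smul_eq_mul] at h
  rw [h]
  by_cases h1 : a = d <;> by_cases h2 : b = c <;>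
    simp [Matrix.single, h1, h2] <;> aesop
end LinAlg

section Final

variable {ι : Type*} [Fintype ι] [DecidableEq ι] (H : ι → Matrix (Fin n) (Fin n) ℂ)

lemma psi_id (horth : ∀ i j, (H i * H j).trace = if i = j then 1 else 0)
    (hspan : ∀ M : Matrix (Fin n) (Fin n) ℂ, M.IsHermitian →
      M ∈ Submodule.span ℝ (Set.range H))
    (Y : Matrix (Fin n) (Fin n) ℂ) :
    ∑ i, H i * Y * H i = Y.trace • (1 : Matrix (Fin n) (Fin n) ℂ) := by
  ext a b
  rw [Matrix.sum_apply]
  have hterm : ∀ i : ι, (H i * Y * H i) a b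
      = ∑ c, ∑ d, Y c d * (H i a c * H i d b) := by
    intro i
    simp only [Matrix.mul_apply, Finset.sum_mul]
    rw [Finset.sum_comm]
    refine Finset.sum_congr rfl fun c _ => Finset.sum_congr rfl fun d _ => by ring
  rw [Finset.sum_congr rfl fun i _ => hterm i, Finset.sum_comm]
  have : ∀ c, ∑ i : ι, ∑ d, Y c d * (H i a c * H i d b)
      = ∑ d, Y c d * ((if a = b then (1:ℂ) else 0) * (if c = d then 1 else 0)) := by
    intro c
    rw [Finset.sum_comm]
    refine Finset.sum_congr rfl fun d _ => ?_
    rw [← Finset.mul_sum, key_id H horth hspan a c d b]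
  rw [Finset.sum_congr rfl fun c _ => this c]
  by_cases hab : a = b <;>
    simp [hab, Matrix.trace, Matrix.diag, Matrix.one_apply, mul_comm]

lemma sum_trace_sandwich (horth : ∀ i j, (H i * H j).trace = if i = j then 1 else 0)
    (hspan : ∀ M : Matrix (Fin n) (Fin n) ℂ, M.IsHermitian →
      M ∈ Submodule.span ℝ (Set.range H))
    (X Y : Matrix (Fin n) (Fin n) ℂ) :
    ∑ i, (X * H i * Y * H i).trace = X.trace * Y.trace := by
  have h1 : ∀ i : ι, X * H i * Y * H i = X * (H i * Y * H i) := by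
    intro i; rw [mul_assoc, mul_assoc, mul_assoc]
  calc ∑ i, (X * H i * Y * H i).trace
      = (X * ∑ i, H i * Y * H i).trace := by
        rw [Finset.mul_sum, Matrix.trace_sum]
        exact Finset.sum_congr rfl fun i _ => by rw [h1]
    _ = X.trace * Y.trace := by
        rw [psi_id H horth hspan Y, mul_smul_comm, mul_one, Matrix.trace_smul,
          smul_eq_mul, mul_comm]

end Final


/-- The Laplacian of `A ↦ tr(A^p)` on the Euclidean space of `n × n` Hermitian matrices:
for any orthonormal basis `(H i)` of the real vector space of Hermitian matrices (with
inner product `⟨A,B⟩ = tr(AB)`), the sum of second derivatives along basis directions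
satisfies `Δ tr(A^p) = p Σ_{k=0}^{p-2} tr(A^k) tr(A^{p-2-k})` for `p ≥ 2`. -/
theorem laplacian_trace_pow (n p : ℕ) (hp : 2 ≤ p) {ι : Type*} [Fintype ι] [DecidableEq ι]
    (H : ι → Matrix (Fin n) (Fin n) ℂ)
    (hherm : ∀ i, (H i).IsHermitian)
    (horth : ∀ i j, (H i * H j).trace = if i = j then 1 else 0)
    (hspan : ∀ M : Matrix (Fin n) (Fin n) ℂ, M.IsHermitian →
      M ∈ Submodule.span ℝ (Set.range H))
    (A : Matrix (Fin n) (Fin n) ℂ) (hA : A.IsHermitian) :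
    ∑ i, iteratedDeriv 2 (fun s : ℝ => ((A + s • H i) ^ p).trace) 0
      = (p : ℂ) * ∑ k ∈ Finset.range (p - 1), (A ^ k).trace * (A ^ (p - 2 - k)).trace := by
  have step1 : ∀ i : ι, iteratedDeriv 2 (fun s : ℝ => ((A + s • H i) ^ p).trace) 0
      = (p : ℂ) * ∑ k ∈ Finset.range (p - 1), (A ^ k * H i * A ^ (p - 2 - k) * H i).trace :=
    fun i => iteratedDeriv_two_trace_pow A (H i) p hp
  rw [Finset.sum_congr rfl fun i _ => step1 i, ← Finset.mul_sum, Finset.sum_comm]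
  congr 1
  refine Finset.sum_congr rfl fun k _ => ?_
  exact sum_trace_sandwich H horth hspan (A ^ k) (A ^ (p - 2 - k))
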